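/- Let B be a braided category, let ς and ς' be anti-twists on B, and let y be an invertible object of B. Write E^ς_{X,M} := (τ_{M,X} ∘ τ_{X,M})⁻¹ ∘ (ς_X ⊗ 𝟙_M) and similarly E^{ς'}. Then the functor −⊗y intertwines the braided module structures, i.e. α_{X,M,y} ∘ (E^ς_{X,M} ⊗ 𝟙_y) ∘ α⁻¹_{X,M,y} = E^{ς'}_{X,M⊗y} for all X, M (α the associator), if and only if ς'_X = φ^y_X ∘ ς_X for all X. Moreover, assuming ς' = φ^y ∘ ς, one has ς'_{M⊗y} = ς_M ⊗ 𝟙_y for all M (i.e. −⊗y is stable) if and only if ς'_y = 𝟙_y. -/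

import Mathlib

open CategoryTheory MonoidalCategory

variable {B : Type*} [Category B] [MonoidalCategory B] [BraidedCategory B]

/-- An anti-twist on a braided category `B`: a natural automorphism `ς` of the identity
functor such that `ς_{X⊗Y} = (τ_{Y,X} ∘ τ_{X,Y})⁻¹ ∘ (ς_X ⊗ ς_Y)`. -/
def IsAntiTwist (ς : ∀ X : B, X ⟶ X) : Prop :=
  (∀ X : B, IsIso (ς X)) ∧
  (∀ {X Y : B} (f : X ⟶ Y), ς X ≫ f = f ≫ ς Y) ∧
  (∀ X Y : B, ς (X ⊗ Y) = (ς X ⊗ₘ ς Y) ≫ (β_ Y X).inv ≫ (β_ X Y).inv)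

/-- `E^ς_{X,M} := (τ_{M,X} ∘ τ_{X,M})⁻¹ ∘ (ς_X ⊗ 𝟙_M)`. -/
def braidedModuleSelfOfAntiTwist (ς : ∀ X : B, X ⟶ X) : ∀ X M : B, X ⊗ M ⟶ X ⊗ M :=
  fun X M => (ς X ▷ M) ≫ (β_ M X).inv ≫ (β_ X M).inv

section Auxiliary

open BraidedCategory

set_option linter.unusedSectionVars false

/-- Right whiskering by an invertible object is injective on morphisms. -/
theorem aux_whiskerRight_cancel (y y' : B) (e : y ⊗ y' ≅ 𝟙_ B) {X X' : B} (f g : X ⟶ X')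
    (h : f ▷ y = g ▷ y) : f = g := by
  have key : ∀ (f : X ⟶ X'), f = (ρ_ X).inv ≫ X ◁ e.inv ≫ (α_ X y y').inv ≫
      ((f ▷ y) ▷ y') ≫ (α_ X' y y').hom ≫ (X' ◁ e.hom) ≫ (ρ_ X').hom := by
    intro f
    rw [associator_naturality_left_assoc, Iso.inv_hom_id_assoc, whisker_exchange_assoc]
    simp
  rw [key f, key g, h]

/-- Double braiding with a tensor product, in terms of `φ`. -/
theorem aux_D_tensor (y : B) (φ : ∀ X : B, X ⟶ X)
    (hφ : ∀ X : B, φ X ▷ y = (β_ X y).hom ≫ (β_ y X).hom) (X M : B) :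
    (β_ X (M ⊗ y)).hom ≫ (β_ (M ⊗ y) X).hom
      = φ X ▷ (M ⊗ y) ≫ (α_ X M y).inv ≫
        (((β_ X M).hom ≫ (β_ M X).hom) ▷ y) ≫ (α_ X M y).hom := by
  calc (β_ X (M ⊗ y)).hom ≫ (β_ (M ⊗ y) X).hom
      = (α_ X M y).inv ≫ ((β_ X M).hom ≫ M ◁ φ X ≫ (β_ M X).hom) ▷ y ≫ (α_ X M y).hom := by
        rw [braiding_tensor_right_hom, braiding_tensor_left_hom]
        simp only [Category.assoc, Iso.inv_hom_id_assoc, ← MonoidalCategory.whiskerLeft_comp_assoc,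
          ← hφ X]
        simp only [comp_whiskerRight, whisker_assoc, Category.assoc, Iso.inv_hom_id_assoc]
    _ = (α_ X M y).inv ≫ ((φ X ▷ M) ≫ (β_ X M).hom ≫ (β_ M X).hom) ▷ y ≫ (α_ X M y).hom := by
        rw [← braiding_naturality_left_assoc]
    _ = _ := by
        simp only [comp_whiskerRight, Category.assoc]
        rw [associator_inv_naturality_left_assoc]

/-- The key intertwining computation. -/
theorem aux_intertwine (y : B) (φ : ∀ X : B, X ⟶ X)
    (hφ : ∀ X : B, φ X ▷ y = (β_ X y).hom ≫ (β_ y X).hom)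
    (ς : ∀ X : B, X ⟶ X) (X M : B) :
    (α_ X M y).inv ≫ ((ς X ▷ M ≫ (β_ M X).inv ≫ (β_ X M).inv) ▷ y) ≫ (α_ X M y).hom
      = ((ς X ≫ φ X) ▷ (M ⊗ y)) ≫ (β_ (M ⊗ y) X).inv ≫ (β_ X (M ⊗ y)).inv := by
  have inner : (ς X ▷ M) ≫ (β_ M X).inv ≫ (β_ X M).inv ≫ φ X ▷ M ≫ (β_ X M).hom ≫ (β_ M X).hom
      = (ς X ≫ φ X) ▷ M := by
    rw [braiding_naturality_left_assoc, braiding_naturality_right]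
    simp
  rw [← cancel_mono ((β_ X (M ⊗ y)).hom)]
  simp only [Category.assoc, Iso.inv_hom_id, Category.comp_id]
  rw [← cancel_mono ((β_ (M ⊗ y) X).hom)]
  simp only [Category.assoc, Iso.inv_hom_id, Category.comp_id]
  rw [aux_D_tensor y φ hφ X M]
  rw [associator_inv_naturality_left_assoc, Iso.hom_inv_id_assoc]
  simp only [← comp_whiskerRight_assoc, ← comp_whiskerRight, Category.assoc]
  rw [inner, associator_naturality_left, Iso.inv_hom_id_assoc]

/-- An anti-twist is the identity on the unit object. -/
theorem aux_antiTwist_unit (ς : ∀ X : B, X ⟶ X) (hς : IsAntiTwist ς) : ς (𝟙_ B) = 𝟙 _ := by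
  obtain ⟨hiso, hnat, hmul⟩ := hς
  have h3 : (λ_ (𝟙_ B)).hom ≫ ς (𝟙_ B) =
      (ς (𝟙_ B) ⊗ₘ ς (𝟙_ B)) ≫ (β_ _ _).inv ≫ (β_ _ _).inv ≫ (λ_ (𝟙_ B)).hom := by
    rw [← hnat (λ_ (𝟙_ B)).hom, hmul]
    simp
  simp [MonoidalCategory.tensorHom_def, ← unitors_equal, ← unitors_inv_equal] at h3
  have := hiso (𝟙_ B)
  rw [← cancel_epi (ς (𝟙_ B)), Category.comp_id, ← h3]

end Auxiliary

/-- Let `ς`, `ς'` be anti-twists on `B` and `y` an invertible object with `φ^y` the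
natural automorphism determined by `φ^y_X ⊗ 𝟙_y = τ_{y,X} ∘ τ_{X,y}`.  Then `−⊗y`
intertwines `E^ς` and `E^{ς'}` iff `ς' = φ^y ∘ ς`; and assuming `ς' = φ^y ∘ ς`, the
functor `−⊗y` is stable (i.e. `ς'_{M⊗y} = ς_M ⊗ 𝟙_y` for all `M`) iff `ς'_y = 𝟙_y`. -/
theorem tensor_by_invertible_braided_and_stable
    (ς ς' : ∀ X : B, X ⟶ X) (hς : IsAntiTwist ς) (hς' : IsAntiTwist ς')
    (y y' : B) (e : y ⊗ y' ≅ 𝟙_ B) (e' : y' ⊗ y ≅ 𝟙_ B)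
    (φ : ∀ X : B, X ⟶ X)
    (hφ : ∀ X : B, φ X ▷ y = (β_ X y).hom ≫ (β_ y X).hom) :
    ((∀ X M : B,
        (α_ X M y).inv ≫ (braidedModuleSelfOfAntiTwist ς X M ▷ y) ≫ (α_ X M y).hom
          = braidedModuleSelfOfAntiTwist ς' X (M ⊗ y))
      ↔ (∀ X : B, ς' X = ς X ≫ φ X)) ∧
    ((∀ X : B, ς' X = ς X ≫ φ X) →
      ((∀ M : B, ς' (M ⊗ y) = ς M ▷ y) ↔ ς' y = 𝟙 y)) := by
  constructor
  · constructor
    · intro h X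
      have h0 := h X (𝟙_ B)
      simp only [braidedModuleSelfOfAntiTwist] at h0
      rw [aux_intertwine y φ hφ ς X (𝟙_ B)] at h0
      have h1 : ς' X ▷ (𝟙_ B ⊗ y) = (ς X ≫ φ X) ▷ (𝟙_ B ⊗ y) := by
        rw [← cancel_mono ((β_ (𝟙_ B ⊗ y) X).inv ≫ (β_ X (𝟙_ B ⊗ y)).inv)]
        exact h0.symm
      have h2 : ς' X ▷ y = (ς X ≫ φ X) ▷ y := by
        have e1 : X ◁ (λ_ y).inv ≫ ς' X ▷ (𝟙_ B ⊗ y) = ς' X ▷ y ≫ X ◁ (λ_ y).inv :=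
          whisker_exchange (ς' X) (λ_ y).inv
        have e2 : X ◁ (λ_ y).inv ≫ (ς X ≫ φ X) ▷ (𝟙_ B ⊗ y)
            = (ς X ≫ φ X) ▷ y ≫ X ◁ (λ_ y).inv :=
          whisker_exchange (ς X ≫ φ X) (λ_ y).inv
        rw [h1] at e1
        rw [e2] at e1
        exact ((cancel_mono (X ◁ (λ_ y).inv)).1 e1).symm
      exact aux_whiskerRight_cancel y y' e _ _ h2
    · intro h X M
      simp only [braidedModuleSelfOfAntiTwist]
      rw [h X]
      exact aux_intertwine y φ hφ ς X M
  · intro h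
    constructor
    · intro hst
      have h0 := hst (𝟙_ B)
      rw [aux_antiTwist_unit ς hς] at h0
      have hn := hς'.2.1 (λ_ y).hom
      rw [h0] at hn
      simp only [MonoidalCategory.id_whiskerRight, Category.id_comp] at hn
      exact ((cancel_epi (λ_ y).hom).1 (by simpa using hn)).symm
    · intro h1 M
      rw [hς'.2.2 M y, h1, tensorHom_id, h M, comp_whiskerRight, Category.assoc, hφ M]
      simp
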